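/- The number of order-preserving, order-decreasing injective partial maps from {1,...,n} to itself equals the Catalan number c_{n+1}, where c_0 = c_1 = 1 and c_n = sum_{i=0}^{n-1} c_i c_{n-1-i}. -/

import Mathlib

open Finset

/-- `f : Fin n → Option (Fin n)` represents an injective partial map of `{1,…,n}`
(elements 0-indexed): `f a = some x` means `a ∈ D(f)` with image `x`. Injectivity: -/
def IsPartialInj {n : ℕ} (f : Fin n → Option (Fin n)) : Prop :=
  ∀ a b x, f a = some x → f b = some x → a = b

/-- order preserving: `a < b` in the domain implies `f a < f b`. -/
def IsOrderPres {n : ℕ} (f : Fin n → Option (Fin n)) : Prop :=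
  ∀ a b x y, a < b → f a = some x → f b = some y → x < y

/-- order decreasing: `f a ≤ a` on the domain. -/
def IsOrderDec {n : ℕ} (f : Fin n → Option (Fin n)) : Prop :=
  ∀ a x, f a = some x → x ≤ a

/-- The planar upper triangular rook monoid `B_n`: order-preserving,
order-decreasing injective partial maps of `{1,…,n}`. -/
def Bn (n : ℕ) : Set (Fin n → Option (Fin n)) :=
  {f | IsPartialInj f ∧ IsOrderPres f ∧ IsOrderDec f}

namespace BnCatalan

open DyckStep

/-- The pair of steps associated to position `j`. -/
def wstep (dB rB : ℕ → Bool) (j : ℕ) : List DyckStep :=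
  [if dB j then D else U, if rB j then U else D]

/-- The word built from the two indicator functions. -/
def wlist (dB rB : ℕ → Bool) (m : ℕ) : List DyckStep :=
  (List.range m).flatMap (wstep dB rB)

/-- Number of `j < t` with `dB j = true`. -/
def dcnt (dB : ℕ → Bool) (t : ℕ) : ℕ :=
  ((Finset.range t).filter (fun j => dB j = true)).card

lemma wlist_succ (dB rB : ℕ → Bool) (m : ℕ) :
    wlist dB rB (m + 1) = wlist dB rB m ++ wstep dB rB m := by
  simp [wlist, List.range_succ]

lemma wlist_length (dB rB : ℕ → Bool) (m : ℕ) : (wlist dB rB m).length = 2 * m := by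
  induction m with
  | zero => rfl
  | succ m ih => rw [wlist_succ, List.length_append, ih]; simp [wstep]; omega

@[simp] lemma dcnt_zero (dB : ℕ → Bool) : dcnt dB 0 = 0 := rfl

lemma dcnt_succ (dB : ℕ → Bool) (m : ℕ) :
    dcnt dB (m + 1) = dcnt dB m + if dB m then 1 else 0 := by
  rw [dcnt, dcnt, Finset.range_add_one, Finset.filter_insert]
  split
  · rw [Finset.card_insert_of_notMem (by simp)]
  · simp

lemma dcnt_le (dB : ℕ → Bool) (t : ℕ) : dcnt dB t ≤ t := by
  calc dcnt dB t ≤ (Finset.range t).card := Finset.card_filter_le _ _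
  _ = t := Finset.card_range t

lemma dcnt_mono (dB : ℕ → Bool) {s t : ℕ} (h : s ≤ t) : dcnt dB s ≤ dcnt dB t :=
  Finset.card_le_card (Finset.filter_subset_filter _ (Finset.range_subset_range.2 h))

lemma count_wstep_D (dB rB : ℕ → Bool) (j : ℕ) :
    (wstep dB rB j).count D + (if rB j then 1 else 0) = (if dB j then 1 else 0) + 1 := by
  cases hd : dB j <;> cases hr : rB j <;> simp [wstep, hd, hr, List.count_cons]

lemma count_wstep_U (dB rB : ℕ → Bool) (j : ℕ) :
    (wstep dB rB j).count U + (if dB j then 1 else 0) = (if rB j then 1 else 0) + 1 := by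
  cases hd : dB j <;> cases hr : rB j <;> simp [wstep, hd, hr, List.count_cons]

lemma count_wlist_D (dB rB : ℕ → Bool) (m : ℕ) :
    (wlist dB rB m).count D + dcnt rB m = dcnt dB m + m := by
  induction m with
  | zero => rfl
  | succ m ih =>
    rw [wlist_succ, List.count_append, dcnt_succ, dcnt_succ]
    have := count_wstep_D dB rB m
    omega

lemma count_wlist_U (dB rB : ℕ → Bool) (m : ℕ) :
    (wlist dB rB m).count U + dcnt dB m = dcnt rB m + m := by
  induction m with
  | zero => rfl
  | succ m ih =>
    rw [wlist_succ, List.count_append, dcnt_succ, dcnt_succ]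
    have := count_wstep_U dB rB m
    omega

lemma take_wlist_even (dB rB : ℕ → Bool) {t m : ℕ} (h : t ≤ m) :
    (wlist dB rB m).take (2 * t) = wlist dB rB t := by
  induction m with
  | zero =>
    have : t = 0 := by omega
    subst this; rfl
  | succ m ih =>
    rcases Nat.lt_or_ge t (m + 1) with h' | h'
    · rw [wlist_succ, List.take_append_of_le_length (by rw [wlist_length]; omega),
        ih (by omega)]
    · have : t = m + 1 := by omega
      subst this
      exact List.take_of_length_le (by rw [wlist_length])

lemma take_wlist_odd (dB rB : ℕ → Bool) {t m : ℕ} (h : t < m) :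
    (wlist dB rB m).take (2 * t + 1) = wlist dB rB t ++ [if dB t then D else U] := by
  induction m with
  | zero => omega
  | succ m ih =>
    rcases Nat.lt_or_ge t m with h' | h'
    · rw [wlist_succ, List.take_append_of_le_length (by rw [wlist_length]; omega), ih h']
    · have : t = m := by omega
      subst this
      rw [wlist_succ,
        show wstep dB rB t = [if dB t then D else U] ++ [if rB t then U else D] from rfl,
        ← List.append_assoc,
        List.take_append_of_le_length (by simp [wlist_length])]
      exact List.take_of_length_le (by simp [wlist_length])

lemma wlist_inj {d1 r1 d2 r2 : ℕ → Bool} {m : ℕ}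
    (h : wlist d1 r1 m = wlist d2 r2 m) :
    ∀ j, j < m → d1 j = d2 j ∧ r1 j = r2 j := by
  induction m with
  | zero => intro j hj; omega
  | succ m ih =>
    rw [wlist_succ, wlist_succ] at h
    have hl := List.append_inj h (by rw [wlist_length, wlist_length])
    intro j hj
    rcases Nat.lt_or_ge j m with h' | h'
    · exact ih hl.1 j h'
    · have hjm : j = m := by omega
      subst hjm
      have h2 := hl.2
      cases hd1 : d1 j <;> cases hd2 : d2 j <;> cases hr1 : r1 j <;> cases hr2 : r2 j <;>
        simp_all [wstep]

/-- Reconstruction of a list of even length from its entries, two at a time. -/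
lemma reconstruct : ∀ (m : ℕ) (l : List DyckStep), l.length = 2 * m →
    l = wlist (fun j => l[2 * j]! == D) (fun j => l[2 * j + 1]! == U) m := by
  intro m
  induction m with
  | zero =>
    intro l hl
    simp only [Nat.mul_zero, List.length_eq_zero_iff] at hl
    subst hl; rfl
  | succ m ih =>
    intro l hl
    match l with
    | [] => simp at hl
    | [a] => simp at hl; omega
    | a :: b :: l' =>
      have hl' : l'.length = 2 * m := by simp at hl; omega
      have key := ih l' hl'
      have hstep0 : wstep (fun j => (a :: b :: l')[2 * j]! == D)
          (fun j => (a :: b :: l')[2 * j + 1]! == U) 0 = [a, b] := by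
        rcases a.dichotomy with rfl | rfl <;> rcases b.dichotomy with rfl | rfl <;>
          simp [wstep]
      have hstepS : ∀ j : ℕ, wstep (fun j => (a :: b :: l')[2 * j]! == D)
          (fun j => (a :: b :: l')[2 * j + 1]! == U) (j + 1)
          = wstep (fun j => l'[2 * j]! == D) (fun j => l'[2 * j + 1]! == U) j := by
        intro j
        have e1 : 2 * (j + 1) = 2 * j + 1 + 1 := by omega
        have e2 : 2 * (j + 1) + 1 = 2 * j + 1 + 1 + 1 := by omega
        simp [wstep, e1, e2, List.getElem!_cons_succ]
      rw [wlist, List.range_succ_eq_map, List.flatMap_cons, List.flatMap_map, hstep0]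
      have : ((List.range m).flatMap fun aa => wstep (fun j => (a :: b :: l')[2 * j]! == D)
          (fun j => (a :: b :: l')[2 * j + 1]! == U) (Nat.succ aa))
          = wlist (fun j => l'[2 * j]! == D) (fun j => l'[2 * j + 1]! == U) m := by
        rw [wlist]
        congr 1
      rw [this, ← key]
      rfl

/-- The balance/dominance conditions making `wlist dB rB m` a Dyck word. -/
def Cond (dB rB : ℕ → Bool) (m : ℕ) : Prop :=
  dcnt dB m = dcnt rB m ∧ ∀ t, t < m → dcnt dB (t + 1) ≤ dcnt rB t

lemma Cond.le {dB rB : ℕ → Bool} {m : ℕ} (hc : Cond dB rB m) {t : ℕ} (ht : t ≤ m) :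
    dcnt dB t ≤ dcnt rB t := by
  rcases Nat.lt_or_ge t m with h | h
  · exact le_trans (dcnt_mono dB (Nat.le_succ t)) (hc.2 t h)
  · have : t = m := by omega
    subst this; exact hc.1.le

lemma cond_dB_zero {dB rB : ℕ → Bool} {m : ℕ} (hm : 0 < m) (hc : Cond dB rB m) :
    dB 0 = false := by
  cases h : dB 0
  · rfl
  · exfalso
    have h1 := hc.2 0 hm
    have h2 := dcnt_succ dB 0
    rw [h] at h2
    simp at h1 h2
    omega

lemma cond_rB_last {dB rB : ℕ → Bool} {m : ℕ} (hc : Cond dB rB (m + 1)) :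
    rB m = false := by
  cases h : rB m
  · rfl
  · exfalso
    have h1 := hc.2 m (Nat.lt_succ_self m)
    have h2 := hc.1
    have h3 : dcnt rB (m + 1) = dcnt rB m + 1 := by
      rw [dcnt_succ, h]; simp
    omega

/-- Build a Dyck word from indicator functions satisfying `Cond`. -/
def mkDyck {dB rB : ℕ → Bool} {m : ℕ} (hc : Cond dB rB m) : DyckWord where
  toList := wlist dB rB m
  count_U_eq_count_D := by
    have hD := count_wlist_D dB rB m
    have hU := count_wlist_U dB rB m
    have := hc.1
    omega
  count_D_le_count_U := by
    intro i
    rcases Nat.lt_or_ge i (2 * m) with hi | hi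
    · have hmod := Nat.div_add_mod i 2
      set t := i / 2 with ht
      have htm : t < m := by omega
      rcases Nat.mod_two_eq_zero_or_one i with h0 | h1
      · have hieq : i = 2 * t := by omega
        rw [hieq, take_wlist_even dB rB htm.le]
        have hD := count_wlist_D dB rB t
        have hU := count_wlist_U dB rB t
        have hk := Cond.le hc htm.le
        have hb1 := dcnt_le dB t
        have hb2 := dcnt_le rB t
        omega
      · have hieq : i = 2 * t + 1 := by omega
        rw [hieq, take_wlist_odd dB rB htm, List.count_append, List.count_append]
        have hD := count_wlist_D dB rB t
        have hU := count_wlist_U dB rB t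
        have hk := hc.2 t htm
        have hb1 := dcnt_le dB t
        have hb2 := dcnt_le rB t
        cases h : dB t
        · have h4 : dcnt dB (t + 1) = dcnt dB t := by rw [dcnt_succ, h]; simp
          simp only [if_neg (by simp : ¬(false = true))]
          simp [List.count_cons]
          omega
        · have h4 : dcnt dB (t + 1) = dcnt dB t + 1 := by rw [dcnt_succ, h]; simp
          simp only [if_pos rfl]
          simp [List.count_cons]
          omega
    · rw [List.take_of_length_le (by rw [wlist_length]; omega)]
      have hD := count_wlist_D dB rB m
      have hU := count_wlist_U dB rB m
      have := hc.1
      omega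

lemma cond_of_dyck (p : DyckWord) {dB rB : ℕ → Bool} {m : ℕ}
    (h : p.toList = wlist dB rB m) : Cond dB rB m := by
  constructor
  · have hbal := p.count_U_eq_count_D
    rw [h] at hbal
    have hD := count_wlist_D dB rB m
    have hU := count_wlist_U dB rB m
    omega
  · intro t ht
    have hb1 := dcnt_le dB t
    have hb2 := dcnt_le rB t
    cases hdb : dB t
    · rw [dcnt_succ, hdb]
      have hpre := p.count_D_le_count_U (2 * t)
      rw [h, take_wlist_even dB rB ht.le] at hpre
      have hD := count_wlist_D dB rB t
      have hU := count_wlist_U dB rB t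
      simp only [Bool.false_eq_true, if_false]
      omega
    · have hpre := p.count_D_le_count_U (2 * t + 1)
      rw [h, take_wlist_odd dB rB ht, hdb, if_pos rfl, List.count_append,
        List.count_append] at hpre
      simp only [List.count_cons, List.count_nil] at hpre
      have hD := count_wlist_D dB rB t
      have hU := count_wlist_U dB rB t
      have h4 : dcnt dB (t + 1) = dcnt dB t + 1 := by rw [dcnt_succ, hdb]; simp
      simp at hpre
      omega

section FSide

variable {n : ℕ}

/-- Indicator of the (shifted) domain of `f`. -/
def fD (f : Fin n → Option (Fin n)) : ℕ → Bool :=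
  fun j => decide (∃ i : Fin n, (i : ℕ) + 1 = j ∧ (f i).isSome = true)

/-- Indicator of the range of `f`. -/
def fR (f : Fin n → Option (Fin n)) : ℕ → Bool :=
  fun j => decide (∃ i x, f i = some x ∧ (x : ℕ) = j)

/-- The domain finset determined by an indicator. -/
def domOf (dB : ℕ → Bool) : Finset (Fin n) :=
  Finset.univ.filter fun i => dB ((i : ℕ) + 1) = true

/-- The range finset determined by an indicator. -/
def ranOf (rB : ℕ → Bool) : Finset (Fin n) :=
  Finset.univ.filter fun x => rB (x : ℕ) = true

lemma dcnt_eq_domOf (dB : ℕ → Bool) (h0 : dB 0 = false) {t : ℕ} (ht : t ≤ n) :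
    dcnt dB (t + 1) = ((domOf (n := n) dB).filter fun i : Fin n => (i : ℕ) < t).card := by
  rw [dcnt,
    show (Finset.range (t + 1)).filter (fun j => dB j = true)
      = ((domOf (n := n) dB).filter fun i : Fin n => (i : ℕ) < t).image (fun i : Fin n => (i : ℕ) + 1) from ?_,
    Finset.card_image_of_injective _ (fun a b hab => Fin.val_injective (by omega))]
  ext j
  simp only [Finset.mem_filter, Finset.mem_range, Finset.mem_image, domOf, Finset.mem_univ,
    true_and]
  constructor
  · rintro ⟨hj, hd⟩
    have hj0 : j ≠ 0 := by rintro rfl; rw [h0] at hd; exact absurd hd (by simp)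
    refine ⟨⟨j - 1, by omega⟩, ⟨?_, by simp; omega⟩, by simp; omega⟩
    have : (⟨j - 1, by omega⟩ : Fin n).val + 1 = j := by simp; omega
    rw [this]; exact hd
  · rintro ⟨i, ⟨hd, hit⟩, rfl⟩
    exact ⟨by omega, hd⟩

lemma dcnt_eq_ranOf (rB : ℕ → Bool) {t : ℕ} (ht : t ≤ n) :
    dcnt rB t = ((ranOf (n := n) rB).filter fun x : Fin n => (x : ℕ) < t).card := by
  rw [dcnt,
    show (Finset.range t).filter (fun j => rB j = true)
      = ((ranOf (n := n) rB).filter fun x : Fin n => (x : ℕ) < t).image (fun x : Fin n => (x : ℕ)) from ?_,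
    Finset.card_image_of_injective _ Fin.val_injective]
  ext j
  simp only [Finset.mem_filter, Finset.mem_range, Finset.mem_image, ranOf, Finset.mem_univ,
    true_and]
  constructor
  · rintro ⟨hj, hr⟩
    exact ⟨⟨j, by omega⟩, ⟨hr, hj⟩, rfl⟩
  · rintro ⟨x, ⟨hr, hxt⟩, rfl⟩
    exact ⟨hxt, hr⟩

lemma dcnt_domOf_total (dB : ℕ → Bool) (h0 : dB 0 = false) :
    dcnt dB (n + 1) = (domOf (n := n) dB).card := by
  rw [dcnt_eq_domOf dB h0 (le_refl n)]
  congr 1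
  apply Finset.filter_true_of_mem
  intro i _
  exact i.isLt

lemma dcnt_ranOf_total (rB : ℕ → Bool) (hn : rB n = false) :
    dcnt rB (n + 1) = (ranOf (n := n) rB).card := by
  rw [dcnt_succ, hn]
  simp only [Bool.false_eq_true, if_false, add_zero]
  rw [dcnt_eq_ranOf rB (le_refl n)]
  congr 1
  apply Finset.filter_true_of_mem
  intro i _
  exact i.isLt

lemma fD_zero (f : Fin n → Option (Fin n)) : fD f 0 = false := by
  simp [fD]

lemma fR_last (f : Fin n → Option (Fin n)) : fR f n = false := by
  simp only [fR, decide_eq_false_iff_not]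
  rintro ⟨i, x, _, hx⟩
  exact absurd hx (by omega)

lemma domOf_fD (f : Fin n → Option (Fin n)) :
    domOf (fD f) = Finset.univ.filter fun i => (f i).isSome = true := by
  ext i
  simp only [domOf, Finset.mem_filter, Finset.mem_univ, true_and, fD, decide_eq_true_eq]
  constructor
  · rintro ⟨i', hi', hs⟩
    have : i' = i := Fin.val_injective (by omega)
    subst this; exact hs
  · intro hs; exact ⟨i, rfl, hs⟩

lemma ranOf_fR (f : Fin n → Option (Fin n)) :
    ranOf (fR f) = Finset.univ.filter fun x => ∃ i, f i = some x := by
  ext x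
  simp only [ranOf, Finset.mem_filter, Finset.mem_univ, true_and, fR, decide_eq_true_eq]
  constructor
  · rintro ⟨i, y, hy, hyx⟩
    have : y = x := Fin.val_injective hyx
    subst this; exact ⟨i, hy⟩
  · rintro ⟨i, hi⟩; exact ⟨i, x, hi, rfl⟩

lemma cond_of_mem {f : Fin n → Option (Fin n)} (hf : f ∈ Bn n) :
    Cond (fD f) (fR f) (n + 1) := by
  obtain ⟨hinj, hpres, hdec⟩ := hf
  constructor
  · rw [dcnt_domOf_total (fD f) (fD_zero f), dcnt_ranOf_total (fR f) (fR_last f),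
      domOf_fD, ranOf_fR]
    apply Finset.card_bij (fun a _ => (f a).getD a)
    · intro a ha
      simp only [Finset.mem_filter, Finset.mem_univ, true_and] at ha ⊢
      obtain ⟨x, hx⟩ := Option.isSome_iff_exists.mp ha
      exact ⟨a, by simp [hx]⟩
    · intro a ha b hb hab
      simp only [Finset.mem_filter, Finset.mem_univ, true_and] at ha hb
      obtain ⟨x, hx⟩ := Option.isSome_iff_exists.mp ha
      obtain ⟨y, hy⟩ := Option.isSome_iff_exists.mp hb
      rw [hx, hy] at hab
      simp only [Option.getD_some] at hab
      subst hab
      exact hinj a b x hx hy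
    · intro x hx
      simp only [Finset.mem_filter, Finset.mem_univ, true_and] at hx
      obtain ⟨i, hi⟩ := hx
      refine ⟨i, by simp [Finset.mem_filter, hi], by simp [hi]⟩
  · intro t ht
    have ht' : t ≤ n := by omega
    rw [dcnt_eq_domOf (fD f) (fD_zero f) ht', dcnt_eq_ranOf (fR f) ht',
      domOf_fD, ranOf_fR]
    apply Finset.card_le_card_of_injOn (fun a => (f a).getD a)
    · intro a ha
      simp only [Finset.coe_filter, Finset.mem_filter, Finset.mem_univ, true_and,
        Set.mem_setOf_eq] at ha ⊢
      obtain ⟨hs, hat⟩ := ha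
      obtain ⟨x, hx⟩ := Option.isSome_iff_exists.mp hs
      have hxa : x ≤ a := hdec a x hx
      exact ⟨⟨a, by simp [hx]⟩, by simp [hx]; omega⟩
    · intro a ha b hb hab
      simp only [Finset.coe_filter, Finset.mem_filter, Finset.mem_univ, true_and,
        Set.mem_setOf_eq] at ha hb
      obtain ⟨x, hx⟩ := Option.isSome_iff_exists.mp ha.1
      obtain ⟨y, hy⟩ := Option.isSome_iff_exists.mp hb.1
      have hab' : (f a).getD a = (f b).getD b := hab
      rw [hx, hy] at hab'
      simp only [Option.getD_some] at hab'
      subst hab'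
      exact hinj a b x hx hy

/-- The unique order-preserving bijection between two finsets of the same size,
as a partial map. -/
def decodeFun (s t : Finset (Fin n)) (h : t.card = s.card) : Fin n → Option (Fin n) :=
  fun i => if hi : i ∈ s then
    some (t.orderEmbOfFin h ((s.orderIsoOfFin rfl).symm ⟨i, hi⟩)) else none

lemma decodeFun_eq_some_iff {s t : Finset (Fin n)} {h : t.card = s.card}
    {i x : Fin n} : decodeFun s t h i = some x ↔
      ∃ hi : i ∈ s, t.orderEmbOfFin h ((s.orderIsoOfFin rfl).symm ⟨i, hi⟩) = x := by
  unfold decodeFun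
  split
  · simp_all
  · simp_all

lemma decodeFun_isSome_iff {s t : Finset (Fin n)} {h : t.card = s.card} {i : Fin n} :
    (decodeFun s t h i).isSome = true ↔ i ∈ s := by
  unfold decodeFun
  split <;> simp_all

lemma decodeFun_ran {s t : Finset (Fin n)} {h : t.card = s.card} (x : Fin n) :
    (∃ i, decodeFun s t h i = some x) ↔ x ∈ t := by
  constructor
  · rintro ⟨i, hi⟩
    rw [decodeFun_eq_some_iff] at hi
    obtain ⟨hmem, rfl⟩ := hi
    exact Finset.orderEmbOfFin_mem t h _
  · intro hx
    have : x ∈ Set.range (t.orderEmbOfFin h) := by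
      rw [Finset.range_orderEmbOfFin]; exact hx
    obtain ⟨k, hk⟩ := this
    refine ⟨(s.orderIsoOfFin rfl k : Fin n), ?_⟩
    rw [decodeFun_eq_some_iff]
    refine ⟨(s.orderIsoOfFin rfl k).2, ?_⟩
    have : (⟨(s.orderIsoOfFin rfl k : Fin n), (s.orderIsoOfFin rfl k).2⟩ :
        {y // y ∈ s}) = s.orderIsoOfFin rfl k := rfl
    rw [this, OrderIso.symm_apply_apply, hk]

lemma decodeFun_partialInj {s t : Finset (Fin n)} {h : t.card = s.card} :
    IsPartialInj (decodeFun s t h) := by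
  intro a b x ha hb
  rw [decodeFun_eq_some_iff] at ha hb
  obtain ⟨hma, ha⟩ := ha
  obtain ⟨hmb, hb⟩ := hb
  have := (t.orderEmbOfFin h).injective (ha.trans hb.symm)
  have h2 := (s.orderIsoOfFin rfl).symm.injective this
  exact congrArg Subtype.val h2

lemma decodeFun_orderPres {s t : Finset (Fin n)} {h : t.card = s.card} :
    IsOrderPres (decodeFun s t h) := by
  intro a b x y hab ha hb
  rw [decodeFun_eq_some_iff] at ha hb
  obtain ⟨hma, rfl⟩ := ha
  obtain ⟨hmb, rfl⟩ := hb
  apply (t.orderEmbOfFin h).strictMono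
  apply (s.orderIsoOfFin rfl).symm.strictMono
  exact hab

lemma decodeFun_orderDec {s t : Finset (Fin n)} {h : t.card = s.card}
    (hcnt : ∀ u, u ≤ n →
      ((s.filter fun i : Fin n => (i : ℕ) < u).card ≤ (t.filter fun x : Fin n => (x : ℕ) < u).card)) :
    IsOrderDec (decodeFun s t h) := by
  intro a x hax
  rw [decodeFun_eq_some_iff] at hax
  obtain ⟨ha, hx⟩ := hax
  by_contra hlt
  push_neg at hlt
  set κ := (s.orderIsoOfFin rfl).symm ⟨a, ha⟩ with hκ
  -- `a` is the `κ`-th element of `s`, `x` the `κ`-th element of `t`, and `a < x`.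
  have hu : (a : ℕ) + 1 ≤ n := by
    have := x.isLt
    have : (a : ℕ) < (x : ℕ) := hlt
    omega
  have hcount := hcnt ((a : ℕ) + 1) hu
  -- lower bound on the `s` side
  have hlow : (κ : ℕ) + 1 ≤ (s.filter fun i : Fin n => (i : ℕ) < (a : ℕ) + 1).card := by
    have himg : ((Finset.univ.filter fun j : Fin s.card => j ≤ κ).image
        (fun j => ((s.orderIsoOfFin rfl j : {y // y ∈ s}) : Fin n)))
        ⊆ s.filter fun i : Fin n => (i : ℕ) < (a : ℕ) + 1 := by
      intro y hy
      simp only [Finset.mem_image, Finset.mem_filter, Finset.mem_univ, true_and] at hy ⊢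
      obtain ⟨j, hj, rfl⟩ := hy
      refine ⟨(s.orderIsoOfFin rfl j).2, ?_⟩
      have hmono : (s.orderIsoOfFin rfl j : {y // y ∈ s})
          ≤ s.orderIsoOfFin rfl κ := (s.orderIsoOfFin rfl).monotone hj
      have : s.orderIsoOfFin rfl κ = ⟨a, ha⟩ := by
        rw [hκ, OrderIso.apply_symm_apply]
      rw [this] at hmono
      have : ((s.orderIsoOfFin rfl j : {y // y ∈ s}) : Fin n) ≤ a := hmono
      omega
    have hcard : ((Finset.univ.filter fun j : Fin s.card => j ≤ κ).image
        (fun j => ((s.orderIsoOfFin rfl j : {y // y ∈ s}) : Fin n))).card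
        = (κ : ℕ) + 1 := by
      have hinj2 : Function.Injective
          (fun j : Fin s.card => ((s.orderIsoOfFin rfl j : {y // y ∈ s}) : Fin n)) :=
        fun a b hab => (s.orderIsoOfFin rfl).injective (Subtype.val_injective hab)
      rw [Finset.card_image_of_injective _ hinj2]
      rw [show (Finset.univ.filter fun j : Fin s.card => j ≤ κ) = Finset.Iic κ from by
        ext j; simp]
      exact Fin.card_Iic κ
    calc (κ : ℕ) + 1 = _ := hcard.symm
    _ ≤ _ := Finset.card_le_card himg
  -- upper bound on the `t` side
  have hhigh : (t.filter fun y : Fin n => (y : ℕ) < (a : ℕ) + 1).card ≤ (κ : ℕ) := by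
    have hsub : (t.filter fun y : Fin n => (y : ℕ) < (a : ℕ) + 1)
        ⊆ (Finset.univ.filter fun j : Fin s.card => j < κ).image (t.orderEmbOfFin h) := by
      intro y hy
      simp only [Finset.mem_filter, Finset.mem_univ, true_and] at hy
      obtain ⟨hyt, hya⟩ := hy
      obtain ⟨j, hj⟩ : y ∈ Set.range (t.orderEmbOfFin h) := by
        rw [Finset.range_orderEmbOfFin]; exact hyt
      simp only [Finset.mem_image, Finset.mem_filter, Finset.mem_univ, true_and]
      refine ⟨j, ?_, hj⟩
      have hax' : (a : ℕ) < (x : ℕ) := hlt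
      have hjκ : t.orderEmbOfFin h j < t.orderEmbOfFin h κ := by
        rw [hj, hx]
        rw [Fin.lt_def]
        omega
      exact (t.orderEmbOfFin h).strictMono.lt_iff_lt.mp hjκ
    calc (t.filter fun y : Fin n => (y : ℕ) < (a : ℕ) + 1).card
        ≤ _ := Finset.card_le_card hsub
      _ ≤ (Finset.univ.filter fun j : Fin s.card => j < κ).card := Finset.card_image_le
      _ = (κ : ℕ) := by
        rw [show (Finset.univ.filter fun j : Fin s.card => j < κ) = Finset.Iio κ from by
          ext j; simp]
        exact Fin.card_Iio κ
  omega

end FSide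

section Unique

variable {n : ℕ}

/-- Two order-preserving partial injections with the same domain and range coincide. -/
lemma bn_unique {f g : Fin n → Option (Fin n)}
    (hf : IsPartialInj f ∧ IsOrderPres f) (hg : IsPartialInj g ∧ IsOrderPres g)
    (hdom : ∀ i, (f i).isSome = (g i).isSome)
    (hran : ∀ x : Fin n, (∃ i, f i = some x) ↔ ∃ i, g i = some x) : f = g := by
  let F : {i // (f i).isSome = true} → Fin n := fun i => (f i.1).get i.2
  let G : {i // (f i).isSome = true} → Fin n := fun i =>
    (g i.1).get (by rw [← hdom]; exact i.2)
  have hFs : ∀ i : {i // (f i).isSome = true}, f i.1 = some (F i) :=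
    fun i => (Option.some_get i.2).symm
  have hGs : ∀ i : {i // (f i).isSome = true}, g i.1 = some (G i) :=
    fun i => (Option.some_get _).symm
  have hF : StrictMono F := by
    intro a b hab
    exact hf.2 a.1 b.1 _ _ hab (hFs a) (hFs b)
  have hG : StrictMono G := by
    intro a b hab
    exact hg.2 a.1 b.1 _ _ hab (hGs a) (hGs b)
  have hrange : Set.range F = Set.range G := by
    ext x
    simp only [Set.mem_range]
    constructor
    · rintro ⟨i, rfl⟩
      have : ∃ j, g j = some (F i) := by
        rw [← hran]; exact ⟨i.1, hFs i⟩
      obtain ⟨j, hj⟩ := this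
      have hjs : (f j).isSome = true := by rw [hdom, hj]; rfl
      refine ⟨⟨j, hjs⟩, ?_⟩
      have := hGs ⟨j, hjs⟩
      rw [hj] at this
      exact (Option.some_injective _ this).symm
    · rintro ⟨i, rfl⟩
      have : ∃ j, f j = some (G i) := by
        rw [hran]; exact ⟨i.1, hGs i⟩
      obtain ⟨j, hj⟩ := this
      have hjs : (f j).isSome = true := by rw [hj]; rfl
      refine ⟨⟨j, hjs⟩, ?_⟩
      have := hFs ⟨j, hjs⟩
      rw [hj] at this
      exact (Option.some_injective _ this).symm
  haveI : WellFoundedLT {i // (f i).isSome = true} := inferInstance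
  have hFG : F = G := by exact (hF.range_inj hG).mp hrange
  funext i
  cases hfi : f i with
  | none =>
    cases hgi : g i with
    | none => rfl
    | some y =>
      have := hdom i
      rw [hfi, hgi] at this
      simp at this
  | some x =>
    have hs : (f i).isSome = true := by rw [hfi]; rfl
    have h1 : F ⟨i, hs⟩ = x := by
      simp only [F]
      simp [hfi]
    have h2 := hGs ⟨i, hs⟩
    rw [← hFG] at h2
    rw [h2, h1]

end Unique

section Main

variable {n : ℕ}

lemma wlist_congr {d1 r1 d2 r2 : ℕ → Bool} {m : ℕ}
    (hd : ∀ j, j < m → d1 j = d2 j) (hr : ∀ j, j < m → r1 j = r2 j) :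
    wlist d1 r1 m = wlist d2 r2 m := by
  induction m with
  | zero => rfl
  | succ m ih =>
    rw [wlist_succ, wlist_succ,
      ih (fun j hj => hd j (by omega)) (fun j hj => hr j (by omega))]
    congr 1
    unfold wstep
    rw [hd m (by omega), hr m (by omega)]

lemma fD_succ (f : Fin n → Option (Fin n)) (i : Fin n) :
    fD f ((i : ℕ) + 1) = (f i).isSome := by
  cases h : (f i).isSome
  · apply decide_eq_false
    rintro ⟨i', hi', hs⟩
    have : i' = i := Fin.val_injective (by omega)
    subst this
    rw [h] at hs
    exact absurd hs (by simp)
  · apply decide_eq_true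
    exact ⟨i, rfl, h⟩

lemma fR_val (f : Fin n → Option (Fin n)) (x : Fin n) :
    fR f (x : ℕ) = true ↔ ∃ i, f i = some x := by
  simp only [fR, decide_eq_true_eq]
  constructor
  · rintro ⟨i, y, hy, hyx⟩
    have : y = x := Fin.val_injective hyx
    subst this
    exact ⟨i, hy⟩
  · rintro ⟨i, hi⟩
    exact ⟨i, x, hi, rfl⟩

/-- The encoding of an element of `Bn n` as a Dyck word of semilength `n + 1`. -/
def encode (f : Bn n) : {p : DyckWord // p.semilength = n + 1} :=
  ⟨mkDyck (cond_of_mem f.2), by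
    have h := (mkDyck (cond_of_mem f.2)).two_mul_semilength_eq_length
    have h2 : (mkDyck (cond_of_mem f.2)).toList.length = 2 * (n + 1) :=
      wlist_length _ _ _
    omega⟩

lemma encode_injective : Function.Injective (encode (n := n)) := by
  rintro ⟨f, hf⟩ ⟨g, hg⟩ h
  have hw : wlist (fD f) (fR f) (n + 1) = wlist (fD g) (fR g) (n + 1) :=
    congrArg (fun q => q.1.toList) h
  have hpt := wlist_inj hw
  apply Subtype.ext
  apply bn_unique ⟨hf.1, hf.2.1⟩ ⟨hg.1, hg.2.1⟩
  · intro i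
    rw [← fD_succ f i, ← fD_succ g i]
    exact (hpt ((i : ℕ) + 1) (by omega)).1
  · intro x
    rw [← fR_val f x, ← fR_val g x, (hpt (x : ℕ) (by omega)).2]

lemma encode_surjective : Function.Surjective (encode (n := n)) := by
  rintro ⟨p, hp⟩
  have hlen : p.toList.length = 2 * (n + 1) := by
    have h := p.two_mul_semilength_eq_length
    rw [hp] at h
    omega
  set dB : ℕ → Bool := fun j => p.toList[2 * j]! == DyckStep.D with hdB
  set rB : ℕ → Bool := fun j => p.toList[2 * j + 1]! == DyckStep.U with hrB
  have hw : p.toList = wlist dB rB (n + 1) := reconstruct (n + 1) p.toList hlen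
  have hc : Cond dB rB (n + 1) := cond_of_dyck p hw
  have h0 : dB 0 = false := cond_dB_zero (Nat.succ_pos n) hc
  have hlast : rB n = false := cond_rB_last hc
  have hcard : (ranOf (n := n) rB).card = (domOf (n := n) dB).card := by
    rw [← dcnt_domOf_total dB h0, ← dcnt_ranOf_total rB hlast]
    exact hc.1.symm
  have hcnt : ∀ u, u ≤ n →
      (((domOf (n := n) dB).filter fun i : Fin n => (i : ℕ) < u).card
        ≤ ((ranOf (n := n) rB).filter fun x : Fin n => (x : ℕ) < u).card) := by
    intro u hu
    rw [← dcnt_eq_domOf dB h0 hu, ← dcnt_eq_ranOf rB hu]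
    exact hc.2 u (by omega)
  set f := decodeFun (domOf dB) (ranOf rB) hcard with hfdef
  have hmem : f ∈ Bn n :=
    ⟨decodeFun_partialInj, decodeFun_orderPres, decodeFun_orderDec hcnt⟩
  refine ⟨⟨f, hmem⟩, ?_⟩
  apply Subtype.ext
  apply DyckWord.ext
  show wlist (fD f) (fR f) (n + 1) = p.toList
  rw [hw]
  apply wlist_congr
  · intro j hj
    rcases Nat.eq_zero_or_pos j with rfl | hj0
    · rw [h0, fD]
      simp
    · have hj1 : j - 1 < n := by omega
      set i : Fin n := ⟨j - 1, hj1⟩ with hi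
      have hij : (i : ℕ) + 1 = j := by simp [hi]; omega
      rw [← hij, fD_succ f i]
      rw [Bool.eq_iff_iff, decodeFun_isSome_iff]
      simp only [domOf, Finset.mem_filter, Finset.mem_univ, true_and]
  · intro j hj
    rcases Nat.lt_or_ge j n with hjn | hjn
    · set x : Fin n := ⟨j, hjn⟩ with hx
      have hxj : (x : ℕ) = j := rfl
      rw [← hxj, Bool.eq_iff_iff, fR_val f x, decodeFun_ran]
      simp only [ranOf, Finset.mem_filter, Finset.mem_univ, true_and]
    · have hjn' : j = n := by omega
      subst hjn'
      rw [hlast, fR_last]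

end Main

theorem order_Bn_eq_catalan' (n : ℕ) : Nat.card (Bn n) = catalan (n + 1) := by
  rw [Nat.card_eq_of_bijective (encode (n := n)) ⟨encode_injective, encode_surjective⟩,
    Nat.card_eq_fintype_card, DyckWord.card_dyckWord_semilength_eq_catalan]

end BnCatalan

/-- The order of `B_n` is the Catalan number `c_{n+1}`. -/
theorem order_Bn_eq_catalan (n : ℕ) : Nat.card (Bn n) = catalan (n + 1) := by
  exact BnCatalan.order_Bn_eq_catalan' n
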